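/- Let ν be a Borel probability measure on [0,1] such that 1 ∈ supp ν and ν({1}) = 0, and define γ(n) := ∫₀¹ tⁿ(1−t) dν(t) for n ∈ ℕ. Then γ(n) > 0 for every n, the sequence γ(n) is nonincreasing with γ(n) → 0, and the sequence of ratios γ(n+1)/γ(n) is nondecreasing with γ(n+1)/γ(n) → 1 as n → ∞. -/

import Mathlib

open MeasureTheory Filter Topology
open scoped ENNReal

set_option linter.unusedSectionVars false
namespace Stmt14Aux

variable {ν : MeasureTheory.Measure ℝ} [MeasureTheory.IsProbabilityMeasure ν]

lemma hae (hsupp : ν (Set.Icc (0 : ℝ) 1)ᶜ = 0) : ∀ᵐ t ∂ν, t ∈ Set.Icc (0:ℝ) 1 :=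
  MeasureTheory.mem_ae_iff.mpr hsupp

lemma meas (n : ℕ) : Measurable fun t : ℝ => t ^ n * (1 - t) := by fun_prop

lemma integ (hsupp : ν (Set.Icc (0 : ℝ) 1)ᶜ = 0) (n : ℕ) :
    Integrable (fun t : ℝ => t ^ n * (1 - t)) ν := by
  refine (integrable_const (1:ℝ)).mono' (meas n).aestronglyMeasurable ?_
  filter_upwards [hae hsupp] with t ht
  obtain ⟨h0, h1⟩ := ht
  have h2 : |t ^ n * (1 - t)| ≤ 1 := by
    rw [abs_mul]
    have ha : |t ^ n| ≤ 1 := by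
      rw [abs_pow]; exact pow_le_one₀ (abs_nonneg t) (abs_le.mpr ⟨by linarith, h1⟩)
    have hb : |1 - t| ≤ 1 := abs_le.mpr ⟨by linarith, by linarith⟩
    calc |t ^ n| * |1 - t| ≤ 1 * 1 := by
          exact mul_le_mul ha hb (abs_nonneg _) zero_le_one
      _ = 1 := by ring
  rw [Real.norm_eq_abs]; exact h2

lemma nonneg (hsupp : ν (Set.Icc (0 : ℝ) 1)ᶜ = 0) (n : ℕ) :
    0 ≤ᵐ[ν] fun t : ℝ => t ^ n * (1 - t) := by
  filter_upwards [hae hsupp] with t ht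
  obtain ⟨h0, h1⟩ := ht
  simp only [Pi.zero_apply]
  have : (0:ℝ) ≤ t ^ n := pow_nonneg h0 n
  nlinarith

lemma gamma_pos (hsupp : ν (Set.Icc (0 : ℝ) 1)ᶜ = 0)
    (hone_supp : ∀ ε : ℝ, 0 < ε → 0 < ν (Set.Icc (1 - ε) 1))
    (hone : ν {(1 : ℝ)} = 0) (n : ℕ) :
    0 < ∫ t : ℝ, t ^ n * (1 - t) ∂ν := by
  rw [integral_pos_iff_support_of_nonneg_ae (nonneg hsupp n) (integ hsupp n)]
  have hsub : Set.Ico (1/2 : ℝ) 1 ⊆ Function.support fun t : ℝ => t ^ n * (1 - t) := by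
    intro t ht
    obtain ⟨h0, h1⟩ := ht
    have ht0 : (0:ℝ) < t := by linarith
    have h1t : (0:ℝ) < 1 - t := by linarith
    exact ne_of_gt (mul_pos (pow_pos ht0 n) h1t)
  have h2 : ν (Set.Ico (1/2 : ℝ) 1) = ν (Set.Icc (1/2 : ℝ) 1) := by
    rw [← Set.Icc_sdiff_right, measure_diff_null hone]
  have h3 : 0 < ν (Set.Icc (1/2 : ℝ) 1) := by
    have h := hone_supp (1/2) (by norm_num)
    have e : (1:ℝ) - 1/2 = 1/2 := by norm_num
    rwa [e] at h
  refine lt_of_lt_of_le ?_ (measure_mono hsub)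
  rw [h2]; exact h3


lemma gamma_mono (hsupp : ν (Set.Icc (0 : ℝ) 1)ᶜ = 0) (n : ℕ) :
    (∫ t : ℝ, t ^ (n + 1) * (1 - t) ∂ν) ≤ ∫ t : ℝ, t ^ n * (1 - t) ∂ν := by
  refine integral_mono_ae (integ hsupp (n+1)) (integ hsupp n) ?_
  filter_upwards [hae hsupp] with t ht
  obtain ⟨h0, h1⟩ := ht
  have h2 : t ^ (n+1) ≤ t ^ n := pow_le_pow_of_le_one h0 h1 (Nat.le_succ n)
  have h3 : (0:ℝ) ≤ 1 - t := by linarith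
  exact mul_le_mul_of_nonneg_right h2 h3

lemma gamma_tendsto (hsupp : ν (Set.Icc (0 : ℝ) 1)ᶜ = 0) :
    Tendsto (fun n : ℕ => ∫ t : ℝ, t ^ n * (1 - t) ∂ν) atTop (𝓝 0) := by
  have h := tendsto_integral_of_dominated_convergence (μ := ν)
      (F := fun n t => t ^ n * (1 - t)) (f := fun _ => (0:ℝ)) (fun _ => (1:ℝ))
      (fun n => (meas n).aestronglyMeasurable) (integrable_const 1) ?_ ?_
  · simpa using h
  · intro n
    filter_upwards [hae hsupp] with t ht
    obtain ⟨h0, h1⟩ := ht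
    rw [Real.norm_eq_abs, abs_mul]
    have ha : |t ^ n| ≤ 1 := by
      rw [abs_pow]; exact pow_le_one₀ (abs_nonneg t) (abs_le.mpr ⟨by linarith, h1⟩)
    have hb : |1 - t| ≤ 1 := abs_le.mpr ⟨by linarith, by linarith⟩
    calc |t ^ n| * |1 - t| ≤ 1 * 1 :=
          mul_le_mul ha hb (abs_nonneg _) zero_le_one
      _ = 1 := by ring
  · filter_upwards [hae hsupp] with t ht
    obtain ⟨h0, h1⟩ := ht
    rcases eq_or_lt_of_le h1 with he | hlt
    · subst he
      simpa using (tendsto_const_nhds : Tendsto (fun _ : ℕ => (0:ℝ)) atTop (𝓝 0))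
    · have := (tendsto_pow_atTop_nhds_zero_of_lt_one h0 hlt).mul_const (1 - t)
      simpa using this

lemma ratio_mono (hsupp : ν (Set.Icc (0 : ℝ) 1)ᶜ = 0)
    (hone_supp : ∀ ε : ℝ, 0 < ε → 0 < ν (Set.Icc (1 - ε) 1))
    (hone : ν {(1 : ℝ)} = 0) (n : ℕ) :
    (∫ t : ℝ, t ^ (n + 1) * (1 - t) ∂ν) / (∫ t : ℝ, t ^ n * (1 - t) ∂ν) ≤
      (∫ t : ℝ, t ^ (n + 2) * (1 - t) ∂ν) / (∫ t : ℝ, t ^ (n + 1) * (1 - t) ∂ν) := by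
  set A := ∫ t : ℝ, t ^ n * (1 - t) ∂ν with hAdef
  set B := ∫ t : ℝ, t ^ (n+1) * (1 - t) ∂ν with hBdef
  set C := ∫ t : ℝ, t ^ (n+2) * (1 - t) ∂ν with hCdef
  have hA : 0 < A := gamma_pos hsupp hone_supp hone n
  have hB : 0 < B := gamma_pos hsupp hone_supp hone (n+1)
  set c : ℝ := B / A with hcdef
  have key : 0 ≤ ∫ t : ℝ,
      (t ^ (n+2) * (1 - t) - 2 * c * (t ^ (n+1) * (1 - t)) + c ^ 2 * (t ^ n * (1 - t))) ∂ν := by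
    apply integral_nonneg_of_ae
    filter_upwards [hae hsupp] with t ht
    obtain ⟨h0, h1⟩ := ht
    have h2 : t ^ (n+2) * (1 - t) - 2 * c * (t ^ (n+1) * (1 - t)) + c ^ 2 * (t ^ n * (1 - t))
        = t ^ n * (1 - t) * (t - c) ^ 2 := by ring
    rw [h2]
    exact mul_nonneg (mul_nonneg (pow_nonneg h0 n) (by linarith)) (sq_nonneg _)
  have i1 : Integrable (fun t : ℝ => t ^ (n+2) * (1 - t) - 2 * c * (t ^ (n+1) * (1 - t))) ν :=
    (integ hsupp (n+2)).sub ((integ hsupp (n+1)).const_mul (2 * c))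
  have i2 : Integrable (fun t : ℝ => c ^ 2 * (t ^ n * (1 - t))) ν :=
    (integ hsupp n).const_mul (c ^ 2)
  have expand : (∫ t : ℝ,
      (t ^ (n+2) * (1 - t) - 2 * c * (t ^ (n+1) * (1 - t)) + c ^ 2 * (t ^ n * (1 - t))) ∂ν)
      = C - 2 * c * B + c ^ 2 * A := by
    rw [integral_add i1 i2,
      integral_sub (integ hsupp (n+2)) ((integ hsupp (n+1)).const_mul (2 * c)),
      integral_const_mul, integral_const_mul]
  rw [expand] at key
  have hc2 : c ^ 2 * A = c * B := by
    rw [hcdef]; field_simp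
  rw [hc2] at key
  have hcB : c * B ≤ C := by linarith
  rw [div_le_div_iff₀ hA hB]
  have : B / A * B ≤ C := by rwa [hcdef] at hcB
  rw [div_mul_eq_mul_div, div_le_iff₀ hA] at this
  linarith

lemma gamma_lower (hsupp : ν (Set.Icc (0 : ℝ) 1)ᶜ = 0)
    (hone_supp : ∀ ε : ℝ, 0 < ε → 0 < ν (Set.Icc (1 - ε) 1))
    (hone : ν {(1 : ℝ)} = 0) {θ : ℝ} (hθ0 : 0 < θ) (hθ1 : θ < 1) :
    ∃ c : ℝ, 0 < c ∧ ∀ n : ℕ, θ ^ n * c ≤ ∫ t : ℝ, t ^ n * (1 - t) ∂ν := by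
  have hint1 : IntegrableOn (fun t : ℝ => 1 - t) (Set.Icc θ 1) ν :=
    (continuous_const.sub continuous_id).integrableOn_Icc
  have hnn : 0 ≤ᵐ[ν.restrict (Set.Icc θ 1)] fun t : ℝ => 1 - t := by
    filter_upwards [ae_restrict_mem (measurableSet_Icc : MeasurableSet (Set.Icc θ 1))]
      with t ht
    obtain ⟨h0, h1⟩ := ht
    simp only [Pi.zero_apply]
    linarith
  refine ⟨∫ t in Set.Icc θ 1, (1 - t) ∂ν, ?_, ?_⟩
  · rw [setIntegral_pos_iff_support_of_nonneg_ae hnn hint1]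
    have h2 : ν (Set.Ico θ 1) = ν (Set.Icc θ 1) := by
      rw [← Set.Icc_sdiff_right, measure_diff_null hone]
    have h := hone_supp (1 - θ) (by linarith)
    have e : (1:ℝ) - (1 - θ) = θ := by ring
    rw [e] at h
    have hpos : (0:ℝ≥0∞) < ν (Set.Ico θ 1) := by rw [h2]; exact h
    refine lt_of_lt_of_le hpos (measure_mono ?_)
    intro t ht
    obtain ⟨h0, h1⟩ := ht
    exact ⟨by simp only [Function.mem_support]; intro hz; nlinarith [hz], ⟨h0, h1.le⟩⟩
  · intro n
    have step1 : (∫ t in Set.Icc θ 1, θ ^ n * (1 - t) ∂ν)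
        ≤ ∫ t in Set.Icc θ 1, t ^ n * (1 - t) ∂ν := by
      refine setIntegral_mono_on (hint1.const_mul _) ((integ hsupp n).integrableOn)
        measurableSet_Icc ?_
      intro t ht
      obtain ⟨h0, h1⟩ := ht
      exact mul_le_mul_of_nonneg_right (pow_le_pow_left₀ hθ0.le h0 n) (by linarith)
    have step2 : (∫ t in Set.Icc θ 1, t ^ n * (1 - t) ∂ν) ≤ ∫ t : ℝ, t ^ n * (1 - t) ∂ν :=
      setIntegral_le_integral (integ hsupp n) (nonneg hsupp n)
    have step0 : (∫ t in Set.Icc θ 1, θ ^ n * (1 - t) ∂ν)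
        = θ ^ n * ∫ t in Set.Icc θ 1, (1 - t) ∂ν := integral_const_mul _ _
    linarith [step1, step2, step0.ge, step0.le]

end Stmt14Aux

/-- For a probability measure `ν` on `[0,1]` with `1 ∈ supp ν` and
`ν({1}) = 0`, the sequence `γ(n) = ∫ tⁿ(1-t) dν` is positive, nonincreasing, tends to `0`,
and `γ(n+1)/γ(n)` is nondecreasing and tends to `1`. -/
theorem stmt_14 (ν : MeasureTheory.Measure ℝ) [MeasureTheory.IsProbabilityMeasure ν]
    (hsupp : ν (Set.Icc (0 : ℝ) 1)ᶜ = 0)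
    (hone_supp : ∀ ε : ℝ, 0 < ε → 0 < ν (Set.Icc (1 - ε) 1))
    (hone : ν {(1 : ℝ)} = 0) :
    (∀ n : ℕ, 0 < ∫ t : ℝ, t ^ n * (1 - t) ∂ν) ∧
    (∀ n : ℕ, (∫ t : ℝ, t ^ (n + 1) * (1 - t) ∂ν) ≤ ∫ t : ℝ, t ^ n * (1 - t) ∂ν) ∧
    Filter.Tendsto (fun n : ℕ => ∫ t : ℝ, t ^ n * (1 - t) ∂ν) Filter.atTop (𝓝 0) ∧
    (∀ n : ℕ, (∫ t : ℝ, t ^ (n + 1) * (1 - t) ∂ν) / (∫ t : ℝ, t ^ n * (1 - t) ∂ν) ≤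
        (∫ t : ℝ, t ^ (n + 2) * (1 - t) ∂ν) / (∫ t : ℝ, t ^ (n + 1) * (1 - t) ∂ν)) ∧
    Filter.Tendsto
      (fun n : ℕ => (∫ t : ℝ, t ^ (n + 1) * (1 - t) ∂ν) / (∫ t : ℝ, t ^ n * (1 - t) ∂ν))
      Filter.atTop (𝓝 1) := by
  have hpos : ∀ n : ℕ, 0 < ∫ t : ℝ, t ^ n * (1 - t) ∂ν :=
    fun n => Stmt14Aux.gamma_pos hsupp hone_supp hone n
  have hmono : ∀ n : ℕ, (∫ t : ℝ, t ^ (n + 1) * (1 - t) ∂ν) ≤ ∫ t : ℝ, t ^ n * (1 - t) ∂ν :=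
    fun n => Stmt14Aux.gamma_mono hsupp n
  have htend0 := Stmt14Aux.gamma_tendsto hsupp
  have hratio := fun n => Stmt14Aux.ratio_mono hsupp hone_supp hone n
  refine ⟨hpos, hmono, htend0, hratio, ?_⟩
  set γ : ℕ → ℝ := fun n => ∫ t : ℝ, t ^ n * (1 - t) ∂ν with hγ
  set r : ℕ → ℝ := fun n => γ (n + 1) / γ n with hr
  show Tendsto r atTop (𝓝 1)
  have hrmono : Monotone r := monotone_nat_of_le_succ fun n => by
    have := hratio n
    simpa [hr, hγ] using this
  have hrle1 : ∀ n, r n ≤ 1 := fun n => (div_le_one (hpos n)).mpr (hmono n)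
  have hbdd : BddAbove (Set.range r) := ⟨1, by rintro x ⟨n, rfl⟩; exact hrle1 n⟩
  set L := ⨆ n, r n with hL
  have htendr : Tendsto r atTop (𝓝 L) := tendsto_atTop_ciSup hrmono hbdd
  have hrL : ∀ n, r n ≤ L := fun n => le_ciSup hbdd n
  have hL1 : L ≤ 1 := ciSup_le hrle1
  have hL0 : 0 < L := lt_of_lt_of_le (div_pos (hpos 1) (hpos 0)) (hrL 0)
  have hupper : ∀ n, γ n ≤ γ 0 * L ^ n := by
    intro n
    induction n with
    | zero => simp
    | succ n ih =>
      have he : γ (n + 1) = r n * γ n := (div_mul_cancel₀ _ (ne_of_gt (hpos n))).symm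
      rw [he]
      calc r n * γ n ≤ L * γ n := mul_le_mul_of_nonneg_right (hrL n) (hpos n).le
        _ ≤ L * (γ 0 * L ^ n) := mul_le_mul_of_nonneg_left ih hL0.le
        _ = γ 0 * L ^ (n + 1) := by ring
  suffices hLeq : L = 1 by rw [← hLeq]; exact htendr
  by_contra hne
  have hLlt : L < 1 := lt_of_le_of_ne hL1 hne
  set θ : ℝ := (L + 1) / 2 with hθ
  have hθ0 : 0 < θ := by rw [hθ]; linarith
  have hθ1 : θ < 1 := by rw [hθ]; linarith
  have hLθ : L < θ := by rw [hθ]; linarith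
  obtain ⟨c, hc, hlow⟩ := Stmt14Aux.gamma_lower hsupp hone_supp hone hθ0 hθ1
  have hkey : ∀ n, c ≤ γ 0 * (L / θ) ^ n := by
    intro n
    have h1 : θ ^ n * c ≤ γ 0 * L ^ n := (hlow n).trans (hupper n)
    have hθn : (0:ℝ) < θ ^ n := pow_pos hθ0 n
    have h2 : c ≤ γ 0 * L ^ n / θ ^ n := by
      rw [le_div_iff₀ hθn, mul_comm]
      exact h1
    calc c ≤ γ 0 * L ^ n / θ ^ n := h2
      _ = γ 0 * (L / θ) ^ n := by rw [mul_div_assoc, ← div_pow]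
  have htend2 : Tendsto (fun n : ℕ => γ 0 * (L / θ) ^ n) atTop (𝓝 0) := by
    have h := tendsto_pow_atTop_nhds_zero_of_lt_one (div_nonneg hL0.le hθ0.le)
      ((div_lt_one hθ0).mpr hLθ)
    simpa using h.const_mul (γ 0)
  have hfin : c ≤ 0 := le_of_tendsto_of_tendsto' tendsto_const_nhds htend2 hkey
  linarith
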